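/- Convergence criterion for Möbius transformations: Let φ_ν be a sequence of Möbius transformations of the Riemann sphere S² and let x, y ∈ S² be points. Suppose there exist convergent sequences x₁^ν, x₂^ν, y^ν ∈ S² such that x ≠ lim x₁^ν, lim x₁^ν ≠ lim x₂^ν, lim x₂^ν ≠ x, y ≠ lim y^ν, lim φ_ν(x₁^ν) = lim φ_ν(x₂^ν) = y, and lim φ_ν⁻¹(y^ν) = x. Then φ_ν converges to the constant y uniformly on every compact subset of S² \ {x}. -/

import Mathlib

open OnePoint Filter Topology

/-- A Möbius transformation of the Riemann sphere `S² = ℂ ∪ {∞}`: there are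
`a b c d : ℂ` with `ad - bc ≠ 0` such that `φ(z) = (az+b)/(cz+d)` for `z ∈ ℂ` with
`cz+d ≠ 0`, `φ(z) = ∞` for `z ∈ ℂ` with `cz+d = 0`, `φ(∞) = a/c` if `c ≠ 0`, and
`φ(∞) = ∞` if `c = 0`. -/
def IsMoebius (φ : OnePoint ℂ → OnePoint ℂ) : Prop :=
  ∃ a b c d : ℂ, a * d - b * c ≠ 0 ∧
    (∀ z : ℂ, c * z + d ≠ 0 → φ (z : OnePoint ℂ) = (((a * z + b) / (c * z + d) : ℂ) : OnePoint ℂ)) ∧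
    (∀ z : ℂ, c * z + d = 0 → φ (z : OnePoint ℂ) = ∞) ∧
    (c ≠ 0 → φ ∞ = ((a / c : ℂ) : OnePoint ℂ)) ∧
    (c = 0 → φ ∞ = ∞)

/-- A sequence of maps `ψ_ν : S² → S²` converges to the constant `p ∈ S²` uniformly
on every compact subset of an open set `U ⊆ S²` if for every compact `K ⊆ U` and
every open neighborhood `V` of `p` we have `ψ_ν(K) ⊆ V` for all sufficiently
large `ν`. -/
def ConvUnifOnCompacts (ψ : ℕ → OnePoint ℂ → OnePoint ℂ) (U : Set (OnePoint ℂ))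
    (p : OnePoint ℂ) : Prop :=
  ∀ K : Set (OnePoint ℂ), K ⊆ U → IsCompact K →
    ∀ V : Set (OnePoint ℂ), IsOpen V → p ∈ V →
      ∃ N : ℕ, ∀ ν ≥ N, ∀ z ∈ K, ψ ν z ∈ V

noncomputable section MoebiusAux

private def lft : OnePoint ℂ → ℂ × ℂ := OnePoint.rec (1, 0) fun z => (z, 1)
@[simp] private lemma lft_infty : lft ∞ = (1, 0) := rfl
@[simp] private lemma lft_coe (z : ℂ) : lft (z : OnePoint ℂ) = (z, 1) := rfl
private def crs (u v : ℂ × ℂ) : ℂ := u.1 * v.2 - u.2 * v.1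
private def nn (u : ℂ × ℂ) : ℝ := Complex.normSq u.1 + Complex.normSq u.2
private def ch (p q : OnePoint ℂ) : ℝ :=
  Complex.normSq (crs (lft p) (lft q)) / (nn (lft p) * nn (lft q))
private def mact (a b c d : ℂ) (u : ℂ × ℂ) : ℂ × ℂ := (a * u.1 + b * u.2, c * u.1 + d * u.2)

private lemma nn_lft_pos (p : OnePoint ℂ) : 0 < nn (lft p) := by
  induction p using OnePoint.rec with
  | infty => simp [nn]
  | coe z =>
    have := Complex.normSq_nonneg z
    simp only [nn, lft_coe]
    simp [Complex.normSq_one]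
    positivity

private lemma crs_lft_eq_zero {p q : OnePoint ℂ} : crs (lft p) (lft q) = 0 ↔ p = q := by
  induction p using OnePoint.rec with
  | infty =>
    induction q using OnePoint.rec with
    | infty => simp [crs]
    | coe w => simp [crs]
  | coe z =>
    induction q using OnePoint.rec with
    | infty => simp [crs]
    | coe w =>
      simp [crs, sub_eq_zero, OnePoint.coe_eq_coe]

private lemma ch_self (p : OnePoint ℂ) : ch p p = 0 := by
  simp [ch, crs_lft_eq_zero.mpr rfl]

private lemma ch_pos {p q : OnePoint ℂ} (h : p ≠ q) : 0 < ch p q := by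
  have h1 := nn_lft_pos p
  have h2 := nn_lft_pos q
  have h3 : crs (lft p) (lft q) ≠ 0 := fun hc => h (crs_lft_eq_zero.mp hc)
  have : 0 < Complex.normSq (crs (lft p) (lft q)) := by
    simpa [Complex.normSq_pos] using h3
  exact div_pos this (by positivity)

private lemma ch_eq_zero_iff {p q : OnePoint ℂ} : ch p q = 0 ↔ p = q := by
  constructor
  · intro h
    by_contra hne
    exact absurd h (ne_of_gt (ch_pos hne))
  · rintro rfl; exact ch_self p


private lemma moebius_lift {φ : OnePoint ℂ → OnePoint ℂ} {a b c d : ℂ}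
    (hdet : a * d - b * c ≠ 0)
    (h1 : ∀ z : ℂ, c * z + d ≠ 0 → φ (z : OnePoint ℂ) = (((a * z + b) / (c * z + d) : ℂ) : OnePoint ℂ))
    (h2 : ∀ z : ℂ, c * z + d = 0 → φ (z : OnePoint ℂ) = ∞)
    (h3 : c ≠ 0 → φ ∞ = ((a / c : ℂ) : OnePoint ℂ))
    (h4 : c = 0 → φ ∞ = ∞) (p : OnePoint ℂ) :
    ∃ l : ℂ, l ≠ 0 ∧ lft (φ p) = (l * (mact a b c d (lft p)).1, l * (mact a b c d (lft p)).2) := by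
  induction p using OnePoint.rec with
  | infty =>
    by_cases hc : c = 0
    · refine ⟨1 / a, ?_, ?_⟩
      · have ha : a ≠ 0 := by
          intro h; apply hdet; rw [h, hc]; ring
        simpa using ha
      · have ha : a ≠ 0 := by
          intro h; apply hdet; rw [h, hc]; ring
        rw [h4 hc]
        simp [mact, hc, ha]
    · refine ⟨1 / c, by simpa using hc, ?_⟩
      rw [h3 hc]
      simp [mact, hc]
      field_simp
  | coe z =>
    by_cases hz : c * z + d = 0
    · have haz : a * z + b ≠ 0 := by
        intro h
        apply hdet
        have h5 : a * d - b * c = a * (c*z+d) - c * (a*z+b) := by ring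
        rw [h5, hz, h]; ring
      refine ⟨1 / (a * z + b), by simpa using haz, ?_⟩
      rw [h2 z hz]
      simp [mact, hz, haz]
    · refine ⟨1 / (c * z + d), by simpa using hz, ?_⟩
      rw [h1 z hz]
      simp [mact]
      constructor
      · field_simp
      · field_simp


section Key
variable {φ : OnePoint ℂ → OnePoint ℂ} {a b c d : ℂ}

private lemma crs_smul (l m : ℂ) (u v : ℂ × ℂ) :
    crs (l * u.1, l * u.2) (m * v.1, m * v.2) = l * m * crs u v := by
  simp only [crs]; ring

private lemma nn_smul (l : ℂ) (u : ℂ × ℂ) :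
    nn (l * u.1, l * u.2) = Complex.normSq l * nn u := by
  simp only [nn, Complex.normSq_mul]; ring

private lemma crs_mact (a b c d : ℂ) (u v : ℂ × ℂ) :
    crs (mact a b c d u) (mact a b c d v) = (a * d - b * c) * crs u v := by
  simp only [crs, mact]; ring

private def LiftCompat (φ : OnePoint ℂ → OnePoint ℂ) (a b c d : ℂ) : Prop :=
  ∀ p : OnePoint ℂ,
    ∃ l : ℂ, l ≠ 0 ∧ lft (φ p) = (l * (mact a b c d (lft p)).1, l * (mact a b c d (lft p)).2)

private lemma nn_mact_pos (hm : LiftCompat φ a b c d) (t : OnePoint ℂ) :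
    0 < nn (mact a b c d (lft t)) := by
  obtain ⟨l, hl0, hl⟩ := hm t
  have h := nn_lft_pos (φ t)
  rw [hl, nn_smul] at h
  have hls : 0 < Complex.normSq l := by simpa [Complex.normSq_pos] using hl0
  nlinarith [nn_lft_pos t]

private lemma ch_moebius (hm : LiftCompat φ a b c d) (u v : OnePoint ℂ) :
    ch (φ u) (φ v) = Complex.normSq (a * d - b * c) * Complex.normSq (crs (lft u) (lft v)) /
      (nn (mact a b c d (lft u)) * nn (mact a b c d (lft v))) := by
  obtain ⟨l, hl0, hl⟩ := hm u
  obtain ⟨m, hm0, hmv⟩ := hm v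
  have hls : (0:ℝ) < Complex.normSq l := by simpa [Complex.normSq_pos] using hl0
  have hms : (0:ℝ) < Complex.normSq m := by simpa [Complex.normSq_pos] using hm0
  have hu := nn_mact_pos hm u
  have hv := nn_mact_pos hm v
  rw [ch, hl, hmv, crs_smul, nn_smul, nn_smul, crs_mact]
  simp only [Complex.normSq_mul]
  field_simp

private lemma four_point (hm : LiftCompat φ a b c d) (p q r s : OnePoint ℂ) :
    ch (φ p) (φ q) * ch (φ r) (φ s) * ch p s * ch r q
      = ch p q * ch r s * ch (φ p) (φ s) * ch (φ r) (φ q) := by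
  have hP : ∀ t : OnePoint ℂ, nn (mact a b c d (lft t)) ≠ 0 :=
    fun t => ne_of_gt (nn_mact_pos hm t)
  have hQ : ∀ t : OnePoint ℂ, nn (lft t) ≠ 0 := fun t => ne_of_gt (nn_lft_pos t)
  simp only [ch_moebius hm]
  simp only [ch]
  ring
end Key

private def wf : OnePoint ℂ → ℝ := OnePoint.rec 0 fun z => 1 / (1 + Complex.normSq z)
private def v1 : OnePoint ℂ → ℝ := OnePoint.rec 0 fun z => z.re / (1 + Complex.normSq z)
private def v2 : OnePoint ℂ → ℝ := OnePoint.rec 0 fun z => z.im / (1 + Complex.normSq z)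

@[simp] private lemma wf_infty : wf ∞ = 0 := rfl
@[simp] private lemma wf_coe (z : ℂ) : wf (z : OnePoint ℂ) = 1 / (1 + Complex.normSq z) := rfl
@[simp] private lemma v1_infty : v1 ∞ = 0 := rfl
@[simp] private lemma v1_coe (z : ℂ) : v1 (z : OnePoint ℂ) = z.re / (1 + Complex.normSq z) := rfl
@[simp] private lemma v2_infty : v2 ∞ = 0 := rfl
@[simp] private lemma v2_coe (z : ℂ) : v2 (z : OnePoint ℂ) = z.im / (1 + Complex.normSq z) := rfl

private lemma one_add_normSq_ne (z : ℂ) : 1 + Complex.normSq z ≠ 0 := by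
  have := Complex.normSq_nonneg z; positivity

private lemma key_real (a b c d : ℝ) :
    ((a - c) * (a - c) + (b - d) * (b - d)) / ((a * a + b * b + 1) * (c * c + d * d + 1)) =
      1 / (1 + (a * a + b * b)) + 1 / (1 + (c * c + d * d))
        - 2 * (1 / (1 + (a * a + b * b))) * (1 / (1 + (c * c + d * d)))
        - 2 * (a / (1 + (a * a + b * b)) * (c / (1 + (c * c + d * d)))
            + b / (1 + (a * a + b * b)) * (d / (1 + (c * c + d * d)))) := by
  have h1 : (1:ℝ) + (a * a + b * b) ≠ 0 := by nlinarith [mul_self_nonneg a, mul_self_nonneg b]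
  have h2 : (1:ℝ) + (c * c + d * d) ≠ 0 := by nlinarith [mul_self_nonneg c, mul_self_nonneg d]
  have h1' : (a * a + b * b + 1 : ℝ) ≠ 0 := by nlinarith [mul_self_nonneg a, mul_self_nonneg b]
  have h2' : (c * c + d * d + 1 : ℝ) ≠ 0 := by nlinarith [mul_self_nonneg c, mul_self_nonneg d]
  field_simp
  ring

private lemma ch_formula (p q : OnePoint ℂ) :
    ch p q = wf p + wf q - 2 * wf p * wf q - 2 * (v1 p * v1 q + v2 p * v2 q) := by
  induction p using OnePoint.rec with
  | infty =>
    induction q using OnePoint.rec with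
    | infty => simp [ch, crs, nn]
    | coe w =>
      simp only [ch, crs, nn, wf_infty, wf_coe, v1_infty, v1_coe, v2_infty, v2_coe,
        lft_infty, lft_coe]
      norm_num [Complex.normSq_one, Complex.normSq_zero, add_comm]
  | coe z =>
    induction q using OnePoint.rec with
    | infty =>
      simp only [ch, crs, nn, wf_infty, wf_coe, v1_infty, v1_coe, v2_infty, v2_coe,
        lft_infty, lft_coe]
      norm_num [Complex.normSq_one, Complex.normSq_zero, add_comm]
    | coe w =>
      have key := key_real z.re z.im w.re w.im
      simp only [ch, crs, nn, wf_coe, v1_coe, v2_coe, lft_coe, mul_one, one_mul,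
        Complex.normSq_one, Complex.normSq_apply, Complex.sub_re, Complex.sub_im]
      convert key using 2 <;> norm_num

private lemma tendsto_inv_norm_cocompact :
    Tendsto (fun z : ℂ => 1 / ‖z‖) (cocompact ℂ) (𝓝 0) := by
  simpa [one_div, Pi.inv_def] using tendsto_norm_cocompact_atTop.inv_tendsto_atTop

private lemma cont_aux {f : ℂ → ℝ} (hb : ∀ z : ℂ, 1 ≤ ‖z‖ → |f z| ≤ 1 / ‖z‖)
    (hc : Continuous f) : Continuous (OnePoint.rec (0:ℝ) f : OnePoint ℂ → ℝ) := by
  rw [OnePoint.continuous_iff]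
  refine ⟨?_, hc⟩
  rw [Filter.coclosedCompact_eq_cocompact]
  refine squeeze_zero_norm' ?_ tendsto_inv_norm_cocompact
  filter_upwards [tendsto_norm_cocompact_atTop.eventually_ge_atTop 1] with z hz
  exact hb z hz

private lemma norm_sq_eq' (z : ℂ) : Complex.normSq z = ‖z‖ ^ 2 := by
  rw [← Complex.sq_norm]

private lemma cont_wf : Continuous wf := by
  refine cont_aux (f := fun z => 1 / (1 + Complex.normSq z)) ?_ ?_
  · intro z hz
    have hz0 : (0:ℝ) < ‖z‖ := lt_of_lt_of_le one_pos hz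
    have h1 : (0:ℝ) < 1 + Complex.normSq z := by
      have := Complex.normSq_nonneg z; positivity
    rw [abs_of_pos (by positivity)]
    rw [div_le_div_iff₀ h1 hz0, one_mul, one_mul]
    rw [norm_sq_eq']
    nlinarith
  · exact continuous_const.div (by continuity) fun z => one_add_normSq_ne z

private lemma cont_v1 : Continuous v1 := by
  refine cont_aux (f := fun z => z.re / (1 + Complex.normSq z)) ?_ ?_
  · intro z hz
    have hz0 : (0:ℝ) < ‖z‖ := lt_of_lt_of_le one_pos hz
    have h1 : (0:ℝ) < 1 + Complex.normSq z := by
      have := Complex.normSq_nonneg z; positivity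
    rw [abs_div, abs_of_pos h1, div_le_div_iff₀ h1 hz0, one_mul]
    have hre : |z.re| ≤ ‖z‖ := Complex.abs_re_le_norm z
    have h2 := norm_sq_eq' z
    nlinarith [abs_nonneg z.re]
  · exact Complex.continuous_re.div (by continuity) fun z => one_add_normSq_ne z

private lemma cont_v2 : Continuous v2 := by
  refine cont_aux (f := fun z => z.im / (1 + Complex.normSq z)) ?_ ?_
  · intro z hz
    have hz0 : (0:ℝ) < ‖z‖ := lt_of_lt_of_le one_pos hz
    have h1 : (0:ℝ) < 1 + Complex.normSq z := by
      have := Complex.normSq_nonneg z; positivity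
    rw [abs_div, abs_of_pos h1, div_le_div_iff₀ h1 hz0, one_mul]
    have hre : |z.im| ≤ ‖z‖ := Complex.abs_im_le_norm z
    have h2 := norm_sq_eq' z
    nlinarith [abs_nonneg z.im]
  · exact Complex.continuous_im.div (by continuity) fun z => one_add_normSq_ne z

private lemma cont_ch : Continuous (fun pq : OnePoint ℂ × OnePoint ℂ => ch pq.1 pq.2) := by
  have he : (fun pq : OnePoint ℂ × OnePoint ℂ => ch pq.1 pq.2)
      = fun pq : OnePoint ℂ × OnePoint ℂ =>
        wf pq.1 + wf pq.2 - 2 * wf pq.1 * wf pq.2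
          - 2 * (v1 pq.1 * v1 pq.2 + v2 pq.1 * v2 pq.2) := by
    funext pq; exact ch_formula pq.1 pq.2
  rw [he]
  have w1 : Continuous (fun pq : OnePoint ℂ × OnePoint ℂ => wf pq.1) := cont_wf.comp continuous_fst
  have w2 : Continuous (fun pq : OnePoint ℂ × OnePoint ℂ => wf pq.2) := cont_wf.comp continuous_snd
  have a1 : Continuous (fun pq : OnePoint ℂ × OnePoint ℂ => v1 pq.1) := cont_v1.comp continuous_fst
  have a2 : Continuous (fun pq : OnePoint ℂ × OnePoint ℂ => v1 pq.2) := cont_v1.comp continuous_snd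
  have b1 : Continuous (fun pq : OnePoint ℂ × OnePoint ℂ => v2 pq.1) := cont_v2.comp continuous_fst
  have b2 : Continuous (fun pq : OnePoint ℂ × OnePoint ℂ => v2 pq.2) := cont_v2.comp continuous_snd
  exact ((w1.add w2).sub ((continuous_const.mul w1).mul w2)).sub
    (continuous_const.mul ((a1.mul a2).add (b1.mul b2)))



private lemma four_point_moebius {φ : OnePoint ℂ → OnePoint ℂ} (hφ : IsMoebius φ)
    (p q r s : OnePoint ℂ) :
    ch (φ p) (φ q) * ch (φ r) (φ s) * ch p s * ch r q
      = ch p q * ch r s * ch (φ p) (φ s) * ch (φ r) (φ q) := by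
  obtain ⟨a, b, c, d, hdet, h1, h2, h3, h4⟩ := hφ
  exact four_point (moebius_lift hdet h1 h2 h3 h4) p q r s

private lemma chlim {L : Filter ℕ} {f g : ℕ → OnePoint ℂ} {pf qg : OnePoint ℂ}
    (hf : Tendsto f L (𝓝 pf)) (hg : Tendsto g L (𝓝 qg)) :
    Tendsto (fun ν => ch (f ν) (g ν)) L (𝓝 (ch pf qg)) := by
  have h := (cont_ch.tendsto (pf, qg)).comp (hf.prodMk_nhds hg)
  simpa [Function.comp_def] using h

private lemma ultra_lim (L : Ultrafilter ℕ) (g : ℕ → OnePoint ℂ) :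
    ∃ p, Tendsto g (L : Filter ℕ) (𝓝 p) := by
  refine ⟨(Ultrafilter.map g L).lim, ?_⟩
  rw [Tendsto, ← Ultrafilter.coe_map]
  exact (Ultrafilter.map g L).le_nhds_lim

set_option maxHeartbeats 1000000 in
theorem moebius_convergence_criterion (φ ψ : ℕ → OnePoint ℂ → OnePoint ℂ)
    (hφ : ∀ ν, IsMoebius (φ ν))
    (hinv : ∀ ν, (∀ z, ψ ν (φ ν z) = z) ∧ (∀ z, φ ν (ψ ν z) = z))
    (x y : OnePoint ℂ)
    (x₁ x₂ yseq : ℕ → OnePoint ℂ) (ℓ₁ ℓ₂ ℓy : OnePoint ℂ)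
    (hx₁ : Tendsto x₁ atTop (𝓝 ℓ₁)) (hx₂ : Tendsto x₂ atTop (𝓝 ℓ₂))
    (hy : Tendsto yseq atTop (𝓝 ℓy))
    (hne₁ : x ≠ ℓ₁) (hne₂ : ℓ₁ ≠ ℓ₂) (hne₃ : ℓ₂ ≠ x) (hney : y ≠ ℓy)
    (hφx₁ : Tendsto (fun ν => φ ν (x₁ ν)) atTop (𝓝 y))
    (hφx₂ : Tendsto (fun ν => φ ν (x₂ ν)) atTop (𝓝 y))
    (hψy : Tendsto (fun ν => ψ ν (yseq ν)) atTop (𝓝 x)) :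
    ConvUnifOnCompacts φ {x}ᶜ y := by
  classical
  intro K hKU hK V hV hyV
  by_contra hcon
  push_neg at hcon
  set S : Set ℕ := {ν | ∃ z ∈ K, φ ν z ∉ V} with hSdef
  have hfreq : ∃ᶠ ν in atTop, ν ∈ S := by
    rw [frequently_atTop]
    intro N
    obtain ⟨ν, hν, hz⟩ := hcon N
    exact ⟨ν, hν, hz⟩
  have hne : (atTop ⊓ 𝓟 S).NeBot := by
    have := Filter.frequently_iff_neBot.mp hfreq
    simpa using this
  haveI := hne
  obtain ⟨L, hLF⟩ : ∃ L : Ultrafilter ℕ, (L : Filter ℕ) ≤ atTop ⊓ 𝓟 S :=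
    ⟨Ultrafilter.of (atTop ⊓ 𝓟 S), Ultrafilter.of_le _⟩
  have hLtop : (L : Filter ℕ) ≤ atTop := hLF.trans inf_le_left
  have hLS : S ∈ (L : Filter ℕ) := le_principal_iff.mp (hLF.trans inf_le_right)
  let zf : ℕ → OnePoint ℂ := fun ν => if h : ∃ z ∈ K, φ ν z ∉ V then h.choose else ∞
  have hzfK : ∀ ν ∈ S, zf ν ∈ K ∧ φ ν (zf ν) ∉ V := by
    intro ν hν
    have hν' : ∃ z ∈ K, φ ν z ∉ V := hν
    simp only [zf, dif_pos hν']
    exact ⟨hν'.choose_spec.1, hν'.choose_spec.2⟩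
  obtain ⟨zs, hzs⟩ := ultra_lim L zf
  obtain ⟨ws, hws⟩ := ultra_lim L fun ν => φ ν (zf ν)
  have hzsK : zs ∈ K :=
    hK.isClosed.mem_of_tendsto hzs (eventually_of_mem hLS fun ν hν => (hzfK ν hν).1)
  have hwsV : ws ∈ Vᶜ :=
    hV.isClosed_compl.mem_of_tendsto hws (eventually_of_mem hLS fun ν hν => (hzfK ν hν).2)
  have h1 := chlim hws (hφx₁.mono_left hLtop)
  have h2 := chlim (hφx₂.mono_left hLtop) (hy.mono_left hLtop)
  have h3 := chlim hzs (hψy.mono_left hLtop)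
  have h4 := chlim (hx₂.mono_left hLtop) (hx₁.mono_left hLtop)
  have h5 := chlim hzs (hx₁.mono_left hLtop)
  have h6 := chlim (hx₂.mono_left hLtop) (hψy.mono_left hLtop)
  have h7 := chlim hws (hy.mono_left hLtop)
  have h8 := chlim (hφx₂.mono_left hLtop) (hφx₁.mono_left hLtop)
  have hLlim : Tendsto (fun ν =>
      ch (φ ν (zf ν)) (φ ν (x₁ ν)) * ch (φ ν (x₂ ν)) (yseq ν)
        * ch (zf ν) (ψ ν (yseq ν)) * ch (x₂ ν) (x₁ ν)) (L : Filter ℕ)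
      (𝓝 (ch ws y * ch y ℓy * ch zs x * ch ℓ₂ ℓ₁)) :=
    ((h1.mul h2).mul h3).mul h4
  have hRlim : Tendsto (fun ν =>
      ch (zf ν) (x₁ ν) * ch (x₂ ν) (ψ ν (yseq ν))
        * ch (φ ν (zf ν)) (yseq ν) * ch (φ ν (x₂ ν)) (φ ν (x₁ ν))) (L : Filter ℕ)
      (𝓝 (ch zs ℓ₁ * ch ℓ₂ x * ch ws ℓy * ch y y)) :=
    ((h5.mul h6).mul h7).mul h8
  have heq : (fun ν =>
      ch (φ ν (zf ν)) (φ ν (x₁ ν)) * ch (φ ν (x₂ ν)) (yseq ν)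
        * ch (zf ν) (ψ ν (yseq ν)) * ch (x₂ ν) (x₁ ν))
      = fun ν =>
      ch (zf ν) (x₁ ν) * ch (x₂ ν) (ψ ν (yseq ν))
        * ch (φ ν (zf ν)) (yseq ν) * ch (φ ν (x₂ ν)) (φ ν (x₁ ν)) := by
    funext ν
    have h4p := four_point_moebius (hφ ν) (zf ν) (x₁ ν) (x₂ ν) (ψ ν (yseq ν))
    rw [(hinv ν).2 (yseq ν)] at h4p
    exact h4p
  rw [heq] at hLlim
  have hkey := tendsto_nhds_unique hLlim hRlim
  have h0 : ch ws y * ch y ℓy * ch zs x * ch ℓ₂ ℓ₁ = 0 := by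
    rw [hkey, ch_self, mul_zero]
  have hzsx : zs ≠ x := by simpa using hKU hzsK
  have hwy : ws = y := by
    by_contra hne'
    have hp := mul_pos (mul_pos (mul_pos (ch_pos hne') (ch_pos hney))
      (ch_pos hzsx)) (ch_pos hne₂.symm)
    linarith
  exact hwsV (hwy ▸ hyV)

end MoebiusAux
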